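/- Let E be a finite-dimensional real normed vector space and let R = (R¹,R²) : E × E → E × E be a twice continuously differentiable (C²) discretization map on E. Define the tangent lift Ψ : (E × E) × (E × E) → (E × E) × (E × E) by Ψ((q,q̇),(v,v̇)) = ((R¹(q,v), DR¹(q,v)(q̇,v̇)), (R²(q,v), DR²(q,v)(q̇,v̇))), where DRᵃ(q,v) denotes the total Fréchet derivative of Rᵃ at (q,v). Then Ψ is a discretization map on E × E: (1) Ψ((q,q̇),(0,0)) = ((q,q̇),(q,q̇)) for all (q,q̇) ∈ E × E; (2) for every (q,q̇) ∈ E × E, the Fréchet derivative at (v,v̇) = (0,0) of the map (v,v̇) ↦ Ψ²((q,q̇),(v,v̇)) − Ψ¹((q,q̇),(v,v̇)) is the identity map on E × E. -/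

import Mathlib

/-- The tangent lift of a map `R = (R¹,R²) : E × E → E × E`:
`Ψ((q,q̇),(v,v̇)) = ((R¹(q,v), DR¹(q,v)(q̇,v̇)), (R²(q,v), DR²(q,v)(q̇,v̇)))`,
where `DRᵃ(q,v)` is the total Fréchet derivative of `Rᵃ` at `(q,v)`. -/
noncomputable def tangentLift {E : Type*} [NormedAddCommGroup E]
    [NormedSpace ℝ E] (R : E × E → E × E)
    (zw : (E × E) × (E × E)) : (E × E) × (E × E) :=
  (((R (zw.1.1, zw.2.1)).1,
      fderiv ℝ (fun p : E × E => (R p).1) (zw.1.1, zw.2.1) (zw.1.2, zw.2.2)),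
   ((R (zw.1.1, zw.2.1)).2,
      fderiv ℝ (fun p : E × E => (R p).2) (zw.1.1, zw.2.1) (zw.1.2, zw.2.2)))

/-- If `R` is a `C²` discretization map on a finite-dimensional real normed
vector space `E`, then its tangent lift `Ψ` is a discretization map on `E × E`:
`Ψ(z,0) = (z,z)` and the Fréchet derivative at `w = 0` of
`w ↦ Ψ²(z,w) - Ψ¹(z,w)` is the identity on `E × E`. -/
theorem tangentLift_is_discretization_map {E : Type*} [NormedAddCommGroup E]
    [NormedSpace ℝ E] [FiniteDimensional ℝ E]
    (R : E × E → E × E) (hC2 : ContDiff ℝ 2 R)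
    (hdisc0 : ∀ q : E, R (q, 0) = (q, q))
    (hdisc1 : ∀ q : E, HasFDerivAt
      (fun v : E => (R (q, v)).2 - (R (q, v)).1)
      (ContinuousLinearMap.id ℝ E) 0) :
    (∀ z : E × E, tangentLift R (z, (0 : E × E)) = (z, z)) ∧
    (∀ z : E × E, HasFDerivAt
      (fun w : E × E => (tangentLift R (z, w)).2 - (tangentLift R (z, w)).1)
      (ContinuousLinearMap.id ℝ (E × E)) 0) := by
  have hR1 : ContDiff ℝ 2 (fun p : E × E => (R p).1) := hC2.fst
  have hR2 : ContDiff ℝ 2 (fun p : E × E => (R p).2) := hC2.snd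
  have hd1 : Differentiable ℝ (fun p : E × E => (R p).1) :=
    hR1.differentiable (by norm_num)
  have hd2 : Differentiable ℝ (fun p : E × E => (R p).2) :=
    hR2.differentiable (by norm_num)
  -- the difference map S
  set S : E × E → E := fun p => (R p).2 - (R p).1 with hSdef
  have hS : ContDiff ℝ 2 S := hR2.sub hR1
  have hSd : Differentiable ℝ S := hS.differentiable (by norm_num)
  set A : E × E → (E × E) →L[ℝ] E := fderiv ℝ S with hAdef
  have hA : ContDiff ℝ 1 A := hS.fderiv_right (by norm_num)
  have hAd : Differentiable ℝ A := hA.differentiable one_ne_zero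
  -- partial-in-q derivative of a map that is the identity on the zero section
  have hDinl : ∀ (f : E × E → E), Differentiable ℝ f →
      (∀ q' : E, f (q', 0) = q') → ∀ q qd : E, fderiv ℝ f (q, 0) (qd, 0) = qd := by
    intro f hf hfq q qd
    have h1 : HasFDerivAt (fun q' : E => f (q', 0))
        ((fderiv ℝ f (q, 0)).comp ((ContinuousLinearMap.id ℝ E).prod 0)) q :=
      (hf (q, 0)).hasFDerivAt.comp q (HasFDerivAt.prodMk (hasFDerivAt_id q) (hasFDerivAt_const 0 q))
    have h2 : HasFDerivAt (fun q' : E => f (q', 0)) (ContinuousLinearMap.id ℝ E) q := by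
      have : (fun q' : E => f (q', 0)) = fun q' => q' := funext fun q' => hfq q'
      rw [this]; exact hasFDerivAt_id q
    have := congrArg (fun L : E →L[ℝ] E => L qd) (h2.unique h1)
    simpa using this.symm
  -- A (q',0) acts as the identity on vertical vectors
  have hAvert : ∀ (q' : E) (u : E), A (q', 0) (0, u) = u := by
    intro q' u
    have h1 : HasFDerivAt (fun v : E => S (q', v))
        ((A (q', 0)).comp (ContinuousLinearMap.prod 0 (ContinuousLinearMap.id ℝ E))) 0 :=
      (hSd (q', 0)).hasFDerivAt.comp 0 (HasFDerivAt.prodMk (hasFDerivAt_const q' (0 : E)) (hasFDerivAt_id (0 : E)))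
    have h2 : HasFDerivAt (fun v : E => S (q', v)) (ContinuousLinearMap.id ℝ E) 0 :=
      hdisc1 q'
    have := congrArg (fun L : E →L[ℝ] E => L u) (h2.unique h1)
    simpa using this.symm
  -- the cross second derivative vanishes
  have hcross : ∀ (q qd c : E), fderiv ℝ A (q, 0) (qd, 0) (0, c) = 0 := by
    intro q qd c
    have hc : HasFDerivAt (fun q' : E => A (q', 0))
        ((fderiv ℝ A (q, 0)).comp ((ContinuousLinearMap.id ℝ E).prod 0)) q :=
      (hAd (q, 0)).hasFDerivAt.comp q (HasFDerivAt.prodMk (hasFDerivAt_id q) (hasFDerivAt_const 0 q))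
    have hu : HasFDerivAt (fun _ : E => ((0 : E), c)) (0 : E →L[ℝ] E × E) q :=
      hasFDerivAt_const _ q
    have h1 := hc.clm_apply hu
    have h2 : HasFDerivAt (fun q' : E => A (q', 0) ((0 : E), c)) (0 : E →L[ℝ] E) q := by
      have : (fun q' : E => A (q', 0) ((0 : E), c)) = fun _ => c :=
        funext fun q' => hAvert q' c
      rw [this]; exact hasFDerivAt_const c q
    have := congrArg (fun L : E →L[ℝ] E => L qd) (h2.unique h1)
    simpa using this.symm
  -- symmetry of the second derivative of S
  have hsymm : ∀ q : E, IsSymmSndFDerivAt ℝ S (q, 0) := fun q =>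
    hS.contDiffAt.isSymmSndFDerivAt (by simp)
  constructor
  · rintro ⟨q, qd⟩
    have e1 : fderiv ℝ (fun p : E × E => (R p).1) (q, 0) (qd, 0) = qd :=
      hDinl _ hd1 (fun q' => by simp [hdisc0 q']) q qd
    have e2 : fderiv ℝ (fun p : E × E => (R p).2) (q, 0) (qd, 0) = qd :=
      hDinl _ hd2 (fun q' => by simp [hdisc0 q']) q qd
    simp [tangentLift, hdisc0 q, e1, e2]
  · rintro ⟨q, qd⟩
    -- the difference of the two halves of the tangent lift
    have hfun : (fun w : E × E =>
        (tangentLift R ((q, qd), w)).2 - (tangentLift R ((q, qd), w)).1) =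
        fun w : E × E => (S (q, w.1), A (q, w.1) (qd, w.2)) := by
      funext w
      have hsub : fderiv ℝ S (q, w.1) =
          fderiv ℝ (fun p : E × E => (R p).2) (q, w.1) -
            fderiv ℝ (fun p : E × E => (R p).1) (q, w.1) :=
        fderiv_sub (hd2 (q, w.1)) (hd1 (q, w.1))
      simp only [tangentLift, hAdef, Prod.mk_sub_mk, hsub]
      rfl
    rw [hfun]
    -- first component
    have h1 : HasFDerivAt (fun w : E × E => S (q, w.1))
        ((ContinuousLinearMap.id ℝ E).comp (ContinuousLinearMap.fst ℝ E E))
        (0 : E × E) :=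
      (hdisc1 q).comp (f := Prod.fst) (0 : E × E) (hasFDerivAt_fst (𝕜 := ℝ) (p := (0 : E × E)))
    -- second component
    have hc : HasFDerivAt (fun w : E × E => A (q, w.1))
        ((fderiv ℝ A (q, 0)).comp
          (ContinuousLinearMap.prod 0 (ContinuousLinearMap.fst ℝ E E)))
        (0 : E × E) :=
      (hAd (q, 0)).hasFDerivAt.comp (0 : E × E)
        (HasFDerivAt.prodMk (hasFDerivAt_const q (0 : E × E)) hasFDerivAt_fst)
    have hu : HasFDerivAt (fun w : E × E => ((qd, w.2) : E × E))
        (ContinuousLinearMap.prod 0 (ContinuousLinearMap.snd ℝ E E))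
        (0 : E × E) :=
      HasFDerivAt.prodMk (hasFDerivAt_const qd (0 : E × E)) hasFDerivAt_snd
    have h2 := hc.clm_apply hu
    have H := h1.prodMk h2
    simp only [Prod.fst_zero, Prod.snd_zero] at H
    have hD : (((ContinuousLinearMap.id ℝ E).comp (ContinuousLinearMap.fst ℝ E E)).prod
        ((A (q, 0)).comp (ContinuousLinearMap.prod 0 (ContinuousLinearMap.snd ℝ E E)) +
          (((fderiv ℝ A (q, 0)).comp
            (ContinuousLinearMap.prod 0 (ContinuousLinearMap.fst ℝ E E))).flip (qd, 0)))) =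
        ContinuousLinearMap.id ℝ (E × E) := by
      refine ContinuousLinearMap.ext fun w => ?_
      refine Prod.ext ?_ ?_
      · simp
      · have hsy : fderiv ℝ A (q, 0) (0, w.1) (qd, 0) =
            fderiv ℝ A (q, 0) (qd, 0) (0, w.1) := by exact hsymm q (0, w.1) (qd, 0)
        simp [hAvert q w.2, hsy, hcross q qd w.1]
    rw [hD] at H
    exact H
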